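/- arXiv:2306.00596 — 2 statements merged into one kernel-verified Lean document; each statement's English description precedes it below -/
import Mathlib

section
/- Let s : ℝ≥0 × ℝⁿ → ℝⁿ be a measurable family of time-t maps s_t, let h₀ : ℝⁿ → ℝ≥0 be a measurable initial density, μ₀ = Leb.withDensity h₀, and let ρ(x) = ∫_{(0,∞)} ψ_t(x) dt be the occupancy density, where ψ_t is a measurable density of (s_t)_*μ₀ with (t,x) ↦ ψ_t(x) jointly measurable. Then for every measurable set A ⊆ ℝⁿ, ∫_A ρ(x) dx = ∫_{ℝⁿ} ( ∫_{(0,∞)} 1_A(s_t(x)) dt ) h₀(x) dx; that is, the measure ϑ(A) := ∫_A ρ dx equals the expected total time spent by trajectories in A. -/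
open MeasureTheory Measure
open scoped ENNReal

/-- **Occupancy interpretation.** With `ρ` the occupancy density of the family of time-`t`
maps `s t` and the initial density `h₀`, the measure `ϑ(A) = ∫_A ρ dx` of any measurable
set `A` equals the expected total time spent by trajectories in `A`. -/
theorem occupancy_eq_expected_time {n : ℕ}
    (s : ℝ × (Fin n → ℝ) → (Fin n → ℝ)) (hs : Measurable s)
    (h₀ : (Fin n → ℝ) → ℝ≥0∞) (hh₀ : Measurable h₀)
    (ψ : ℝ × (Fin n → ℝ) → ℝ≥0∞) (hψ : Measurable ψ)
    (hpush : ∀ t : ℝ, 0 ≤ t →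
      Measure.map (fun x => s (t, x)) (volume.withDensity h₀)
        = volume.withDensity (fun x => ψ (t, x)))
    (ρ : (Fin n → ℝ) → ℝ≥0∞)
    (hρ : ∀ x, ρ x = ∫⁻ t in Set.Ioi (0 : ℝ), ψ (t, x))
    (A : Set (Fin n → ℝ)) (hA : MeasurableSet A) :
    ∫⁻ x in A, ρ x
      = ∫⁻ x, (∫⁻ t in Set.Ioi (0 : ℝ), A.indicator (fun _ => (1 : ℝ≥0∞)) (s (t, x))) * h₀ x := by
  have hind : Measurable fun p : ℝ × (Fin n → ℝ) =>
      A.indicator (fun _ => (1 : ℝ≥0∞)) (s p) :=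
    (measurable_one.indicator hA).comp hs
  calc ∫⁻ x in A, ρ x
      = ∫⁻ x in A, ∫⁻ t in Set.Ioi (0:ℝ), ψ (t, x) := by simp only [hρ]
    _ = ∫⁻ t in Set.Ioi (0:ℝ), ∫⁻ x in A, ψ (t, x) := by
        have hm : AEMeasurable (Function.uncurry fun (x : Fin n → ℝ) (t : ℝ) => ψ (t, x))
            ((volume.restrict A).prod (volume.restrict (Set.Ioi 0))) :=
          (hψ.comp measurable_swap).aemeasurable
        rw [lintegral_lintegral_swap hm]
    _ = ∫⁻ t in Set.Ioi (0:ℝ), ∫⁻ x, A.indicator (fun _ => (1:ℝ≥0∞)) (s (t, x)) * h₀ x := by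
        refine setLIntegral_congr_fun measurableSet_Ioi
          (fun t ht => ?_)
        have hst : Measurable fun x => s (t, x) :=
          hs.comp (measurable_const.prodMk measurable_id)
        have h1 : ∫⁻ x in A, ψ (t, x) = volume.withDensity (fun x => ψ (t, x)) A :=
          (withDensity_apply _ hA).symm
        rw [h1, ← hpush t (le_of_lt ht), Measure.map_apply hst hA,
          withDensity_apply _ (hst hA), ← lintegral_indicator (hst hA)]
        refine lintegral_congr fun x => ?_
        by_cases hx : s (t, x) ∈ A <;>
          simp [Set.indicator, hx]
    _ = ∫⁻ x, ∫⁻ t in Set.Ioi (0:ℝ), A.indicator (fun _ => (1:ℝ≥0∞)) (s (t, x)) * h₀ x := by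
        have hm : AEMeasurable (Function.uncurry fun (t : ℝ) (x : Fin n → ℝ) =>
            A.indicator (fun _ => (1:ℝ≥0∞)) (s (t, x)) * h₀ x)
            ((volume.restrict (Set.Ioi 0)).prod volume) :=
          (hind.mul (hh₀.comp measurable_snd)).aemeasurable
        rw [lintegral_lintegral_swap hm]
    _ = ∫⁻ x, (∫⁻ t in Set.Ioi (0:ℝ), A.indicator (fun _ => (1:ℝ≥0∞)) (s (t, x))) * h₀ x := by
        refine lintegral_congr fun x => ?_
        exact lintegral_mul_const _ (hind.comp (measurable_id.prodMk measurable_const))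
end

section
/- Let s : ℝ≥0 × ℝⁿ → ℝⁿ be a measurable family of time-t maps s_t, let h₀ : ℝⁿ → ℝ≥0 be a measurable initial density, μ₀ = Leb.withDensity h₀, and let ρ(x) = ∫_{(0,∞)} ψ_t(x) dt be the occupancy density, where ψ_t is a measurable density of (s_t)_*μ₀ with (t,x) ↦ ψ_t(x) jointly measurable. Then for any measurable unsafe set X_u ⊆ ℝⁿ, the zero-occupancy condition ∫_{X_u} ρ(x) dx = 0 holds if and only if for μ₀-almost every initial point x₀, ∫_{(0,∞)} 1_{X_u}(s_t(x₀)) dt = 0; i.e., almost every trajectory spends zero time in the unsafe set. -/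
open MeasureTheory Measure
open scoped ENNReal

/-- **Zero occupancy ⇔ almost-sure safety.** With `ρ` the occupancy density of the family of
time-`t` maps `s t` and initial density `h₀`, the occupancy of a measurable unsafe set `X_u`
vanishes iff for `μ₀`-almost every initial point the trajectory spends zero time in `X_u`. -/
theorem zero_occupancy_iff_ae_safe {n : ℕ}
    (s : ℝ × (Fin n → ℝ) → (Fin n → ℝ)) (hs : Measurable s)
    (h₀ : (Fin n → ℝ) → ℝ≥0∞) (hh₀ : Measurable h₀)
    (ψ : ℝ × (Fin n → ℝ) → ℝ≥0∞) (hψ : Measurable ψ)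
    (hpush : ∀ t : ℝ, 0 ≤ t →
      Measure.map (fun x => s (t, x)) (volume.withDensity h₀)
        = volume.withDensity (fun x => ψ (t, x)))
    (ρ : (Fin n → ℝ) → ℝ≥0∞)
    (hρ : ∀ x, ρ x = ∫⁻ t in Set.Ioi (0 : ℝ), ψ (t, x))
    (Xu : Set (Fin n → ℝ)) (hXu : MeasurableSet Xu) :
    (∫⁻ x in Xu, ρ x) = 0 ↔
      ∀ᵐ x₀ ∂(volume.withDensity h₀),
        (∫⁻ t in Set.Ioi (0 : ℝ), Xu.indicator (fun _ => (1 : ℝ≥0∞)) (s (t, x₀))) = 0 := by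
  set μ := volume.withDensity h₀ with hμ
  have hg : Measurable fun p : ℝ × (Fin n → ℝ) =>
      Xu.indicator (fun _ => (1 : ℝ≥0∞)) (s p) :=
    (measurable_one.indicator hXu).comp hs
  have hF : Measurable fun x₀ =>
      ∫⁻ t in Set.Ioi (0 : ℝ), Xu.indicator (fun _ => (1 : ℝ≥0∞)) (s (t, x₀)) := by
    exact Measurable.lintegral_prod_left hg
  have key : (∫⁻ x in Xu, ρ x) =
      ∫⁻ x₀, (∫⁻ t in Set.Ioi (0 : ℝ),
        Xu.indicator (fun _ => (1 : ℝ≥0∞)) (s (t, x₀))) ∂μ := by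
    calc (∫⁻ x in Xu, ρ x)
        = ∫⁻ x in Xu, ∫⁻ t in Set.Ioi (0 : ℝ), ψ (t, x) :=
          lintegral_congr fun x => hρ x
      _ = ∫⁻ t in Set.Ioi (0 : ℝ), ∫⁻ x in Xu, ψ (t, x) := by
          apply lintegral_lintegral_swap
          exact ((hψ.comp measurable_swap).aemeasurable)
      _ = ∫⁻ t in Set.Ioi (0 : ℝ), ∫⁻ x₀,
            Xu.indicator (fun _ => (1 : ℝ≥0∞)) (s (t, x₀)) ∂μ := by
          refine setLIntegral_congr_fun measurableSet_Ioi ?_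
          refine fun t ht => ?_
          have hmeas : Measurable fun x => s (t, x) :=
            hs.comp (measurable_const.prodMk measurable_id)
          calc (∫⁻ x in Xu, ψ (t, x))
              = (volume.withDensity fun x => ψ (t, x)) Xu := by
                rw [withDensity_apply _ hXu]
            _ = (Measure.map (fun x => s (t, x)) μ) Xu := by
                rw [hpush t ht.le]
            _ = μ ((fun x => s (t, x)) ⁻¹' Xu) := Measure.map_apply hmeas hXu
            _ = ∫⁻ x₀, Xu.indicator (fun _ => (1 : ℝ≥0∞)) (s (t, x₀)) ∂μ := by
                rw [lintegral_indicator_const_comp hmeas hXu, one_mul]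
      _ = ∫⁻ x₀, (∫⁻ t in Set.Ioi (0 : ℝ),
            Xu.indicator (fun _ => (1 : ℝ≥0∞)) (s (t, x₀))) ∂μ := by
          apply lintegral_lintegral_swap
          exact hg.aemeasurable
  rw [key, lintegral_eq_zero_iff hF]
  rfl
end
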